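/- Let n ≥ 2, l ∈ ℤ, ω = e^{2πi/n}, and define n_l(t) = Σ over pairs (j,k) with 0 ≤ j,k ≤ n−1, j ≠ k, j+k ≠ n, of e^{−i·t·sin(π(j+k)/n)·sin(π(j−k)/n)} · ω^{l(j−k)}. Then for every T ≥ 0, |∫_0^T n_l(t) dt| ≤ 32·(n·ln(n))². -/

import Mathlib

open Real


lemma sin_lower_half (n m : ℕ) (h1 : 1 ≤ m) (h2 : 2 * m ≤ n) :
    (2 * m : ℝ) / n ≤ Real.sin (π * m / n) := by
  have hn0 : (0:ℝ) < n := by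
    have : 0 < n := by omega
    exact_mod_cast this
  have hx : π * m / n ≤ π / 2 := by
    rw [div_le_div_iff₀ hn0 two_pos]
    have : (2 * m : ℝ) ≤ n := by exact_mod_cast h2
    nlinarith [pi_pos]
  have := Real.mul_le_sin (x := π * m / n) (by positivity) hx
  calc (2*(m:ℝ))/n = 2/π * (π * m / n) := by field_simp
    _ ≤ _ := this

lemma sin_lower (n m : ℕ) (h1 : 1 ≤ m) (h2 : m < n) :
    (2 * min m (n - m) : ℝ) / n ≤ Real.sin (π * m / n) := by
  have hn0 : (0:ℝ) < n := by
    have : 0 < n := by omega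
    exact_mod_cast this
  rcases le_or_gt (2 * m) n with h | h
  · have hmin : min m (n-m) = m := by omega
    rw [hmin]; exact_mod_cast sin_lower_half n m h1 h
  · have hmin : min m (n-m) = n - m := by omega
    rw [hmin]
    have key := sin_lower_half n (n - m) (by omega) (by omega)
    have hc : ((n - m : ℕ) : ℝ) = (n : ℝ) - m := by
      have : m ≤ n := le_of_lt h2
      push_cast [this]; ring
    rw [hc] at key ⊢
    have : Real.sin (π * ((n:ℝ) - m) / n) = Real.sin (π * m / n) := by
      rw [show π * ((n:ℝ) - m) / n = π - π * m / n by field_simp, Real.sin_pi_sub]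
    linarith [key, this.le]

lemma sin_pos' (n m : ℕ) (h1 : 1 ≤ m) (h2 : m < n) : 0 < Real.sin (π * m / n) := by
  have hn0 : (0:ℝ) < n := by
    have : 0 < n := by omega
    exact_mod_cast this
  have h := sin_lower n m h1 h2
  have : (0:ℝ) < (2 * min m (n - m) : ℝ) / n := by
    have : 0 < min m (n-m) := by omega
    have : (0:ℝ) < (min m (n-m) : ℕ) := by exact_mod_cast this
    positivity
  calc (0:ℝ) < _ := this
    _ ≤ _ := h

lemma sum_reflect_inv (n : ℕ) (hn : 2 ≤ n) :
    ∑ m ∈ Finset.Ico 1 n, (1 : ℝ) / ((n:ℝ) - m) = ∑ m ∈ Finset.Ico 1 n, (1:ℝ) / m := by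
  apply Finset.sum_nbij' (fun m => n - m) (fun m => n - m)
  · intro a ha; simp only [Finset.mem_Ico] at *; omega
  · intro a ha; simp only [Finset.mem_Ico] at *; omega
  · intro a ha; simp only [Finset.mem_Ico] at ha; omega
  · intro a ha; simp only [Finset.mem_Ico] at ha; omega
  · intro a ha; simp only [Finset.mem_Ico] at ha
    have : ((n - a : ℕ) : ℝ) = (n:ℝ) - a := by
      have : a ≤ n := by omega
      push_cast [this]; ring
    rw [this]


lemma harm_sum (n : ℕ) : ∑ m ∈ Finset.Ico 1 n, (1:ℝ) / m = (harmonic (n-1) : ℝ) := by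
  have h : (harmonic (n-1) : ℝ) = ∑ i ∈ Finset.range (n-1), (((i:ℝ))+1)⁻¹ := by
    rw [harmonic]; push_cast; rfl
  rw [h, Finset.sum_Ico_eq_sum_range]
  apply Finset.sum_congr rfl
  intro i _
  push_cast
  rw [one_div, add_comm]

lemma sum_inv_sin_le (n : ℕ) (hn : 2 ≤ n) :
    ∑ m ∈ Finset.Ico 1 n, (Real.sin (π * m / n))⁻¹ ≤ 2 * n * Real.log n := by
  have hn0 : (0:ℝ) < n := by positivity
  have step1 : ∑ m ∈ Finset.Ico 1 n, (Real.sin (π * m / n))⁻¹ ≤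
      ∑ m ∈ Finset.Ico 1 n, ((n:ℝ)/2) * (1/(m:ℝ) + 1/((n:ℝ) - m)) := by
    apply Finset.sum_le_sum
    intro m hm
    simp only [Finset.mem_Ico] at hm
    obtain ⟨h1, h2⟩ := hm
    have hsp := sin_pos' n m h1 h2
    have hsl := sin_lower n m h1 h2
    have hmin1 : 1 ≤ min m (n - m) := by omega
    have hminr : (0:ℝ) < ((min m (n-m) : ℕ) : ℝ) := by exact_mod_cast by omega
    have hm0 : (0:ℝ) < m := by exact_mod_cast h1
    have hmn : (m:ℝ) < n := by exact_mod_cast h2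
    have hnm0 : (0:ℝ) < (n:ℝ) - m := by linarith
    have key : (Real.sin (π * m / n))⁻¹ ≤ (n:ℝ) / (2 * ((min m (n-m):ℕ):ℝ)) := by
      have h0 : (0:ℝ) < 2 * ((min m (n-m):ℕ):ℝ) / n := by positivity
      calc (Real.sin (π * m / n))⁻¹ ≤ (2 * ((min m (n-m):ℕ):ℝ) / n)⁻¹ :=
            inv_anti₀ h0 hsl
        _ = (n:ℝ) / (2 * ((min m (n-m):ℕ):ℝ)) := inv_div _ _
    refine key.trans ?_
    rcases le_total m (n-m) with h | h
    · have hmin : min m (n-m) = m := min_eq_left h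
      rw [hmin]
      have e1 : (n:ℝ)/2 * (1/(m:ℝ)) = (n:ℝ)/(2*(m:ℝ)) := by
        rw [div_mul_div_comm, mul_one]
      have e2 : (0:ℝ) ≤ (n:ℝ)/2 * (1/((n:ℝ)-m)) := by positivity
      rw [mul_add]
      linarith
    · have hmin : min m (n-m) = n - m := min_eq_right h
      rw [hmin]
      have hc : ((n - m : ℕ) : ℝ) = (n:ℝ) - m := by
        have : m ≤ n := h2.le
        push_cast [this]; ring
      rw [hc]
      have e1 : (n:ℝ)/2 * (1/((n:ℝ)-m)) = (n:ℝ)/(2*((n:ℝ)-m)) := by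
        rw [div_mul_div_comm, mul_one]
      have e2 : (0:ℝ) ≤ (n:ℝ)/2 * (1/(m:ℝ)) := by positivity
      rw [mul_add]
      linarith
  have step2 : ∑ m ∈ Finset.Ico 1 n, ((n:ℝ)/2) * (1/(m:ℝ) + 1/((n:ℝ) - m))
      = (n:ℝ) * (harmonic (n-1) : ℝ) := by
    rw [← Finset.mul_sum, Finset.sum_add_distrib, sum_reflect_inv n hn, harm_sum n]
    ring
  have step3 : (harmonic (n-1) : ℝ) ≤ 1 + Real.log (n-1 : ℕ) := harmonic_le_one_add_log _
  have step4 : (n:ℝ) * (1 + Real.log (n-1:ℕ)) ≤ 2 * n * Real.log n := by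
    rcases eq_or_lt_of_le hn with h | h
    · rw [← h]; norm_num
      have := Real.log_two_gt_d9
      nlinarith
    · have h3 : 3 ≤ n := h
      have hlog1 : 1 ≤ Real.log n := by
        rw [Real.le_log_iff_exp_le hn0]
        calc Real.exp 1 ≤ 2.7182818286 := (Real.exp_one_lt_d9).le
          _ ≤ 3 := by norm_num
          _ ≤ n := by exact_mod_cast h3
      have hlog2 : Real.log (n-1:ℕ) ≤ Real.log n := by
        apply Real.log_le_log (by exact_mod_cast by omega : (0:ℝ) < ((n-1:ℕ):ℝ))
        exact_mod_cast Nat.sub_le n 1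
      nlinarith
  calc ∑ m ∈ Finset.Ico 1 n, (Real.sin (π * m / n))⁻¹ ≤ _ := step1
    _ = _ := step2
    _ ≤ (n:ℝ) * (1 + Real.log (n-1:ℕ)) := by
        have : (0:ℝ) ≤ n := hn0.le
        nlinarith [step3]
    _ ≤ _ := step4

lemma mod2 (n x : ℕ) (h : x < 2*n) : x % n = x ∨ x % n = x - n := by
  rcases lt_or_ge x n with h' | h'
  · left; exact Nat.mod_eq_of_lt h'
  · right; rw [Nat.mod_eq_sub_mod h', Nat.mod_eq_of_lt (by omega)]

lemma mod_bounds (n j k : ℕ) (hn : 2 ≤ n) (hj : j < n) (hk : k < n)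
    (hjk : j ≠ k) (hsum : j + k ≠ n) :
    1 ≤ (j+k) % n ∧ (j+k) % n < n ∧ 1 ≤ (j+n-k) % n ∧ (j+n-k) % n < n := by
  rcases lt_or_ge (j+k) n with h | h <;>
  rcases lt_or_ge (j+n-k) n with h' | h'
  · rw [Nat.mod_eq_of_lt h, Nat.mod_eq_of_lt h']; omega
  · rw [Nat.mod_eq_of_lt h, Nat.mod_eq_sub_mod h', Nat.mod_eq_of_lt (by omega)]; omega
  · rw [Nat.mod_eq_sub_mod h, Nat.mod_eq_of_lt (by omega), Nat.mod_eq_of_lt h']; omega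
  · rw [Nat.mod_eq_sub_mod h, Nat.mod_eq_of_lt (by omega), Nat.mod_eq_sub_mod h',
      Nat.mod_eq_of_lt (by omega)]; omega

lemma abs_sin_prod (n j k : ℕ) (hn : 2 ≤ n) (hj : j < n) (hk : k < n)
    (hjk : j ≠ k) (hsum : j + k ≠ n) :
    |Real.sin (π * ((j:ℝ) + k) / n) * Real.sin (π * ((j:ℝ) - k) / n)|
      = Real.sin (π * (((j+k) % n : ℕ) : ℝ) / n) * Real.sin (π * (((j+n-k) % n : ℕ) : ℝ) / n) := by
  have hn0 : (0:ℝ) < n := by positivity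
  have hnne : (n:ℝ) ≠ 0 := ne_of_gt hn0
  obtain ⟨ha1, ha2, hb1, hb2⟩ := mod_bounds n j k hn hj hk hjk hsum
  have hsina : |Real.sin (π * ((j:ℝ) + k) / n)| = Real.sin (π * (((j+k)%n : ℕ):ℝ) / n) := by
    rcases lt_or_ge (j+k) n with h | h
    · have h' := Nat.mod_eq_of_lt h
      have : ((j:ℝ) + k) = (((j+k)%n : ℕ):ℝ) := by rw [h']; push_cast; ring
      rw [this]
      exact abs_of_pos (sin_pos' n _ ha1 ha2)
    · have h' : (j+k) % n = j+k-n := by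
        rw [Nat.mod_eq_sub_mod h, Nat.mod_eq_of_lt (by omega)]
      have heq : π * ((j:ℝ) + k) / n = π * (((j+k)%n : ℕ):ℝ) / n + π := by
        have hcast : ((j:ℝ) + k) = (((j+k)%n : ℕ):ℝ) + n := by
          rw [h']; push_cast [h]; ring
        rw [hcast]; field_simp
      rw [heq, Real.sin_add_pi, abs_neg]
      exact abs_of_pos (sin_pos' n _ ha1 ha2)
  have hsinb : |Real.sin (π * ((j:ℝ) - k) / n)| = Real.sin (π * (((j+n-k)%n : ℕ):ℝ) / n) := by
    rcases lt_or_ge (j+n-k) n with h | h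
    · have h' := Nat.mod_eq_of_lt h
      have heq : π * ((j:ℝ) - k) / n = π * (((j+n-k)%n : ℕ):ℝ) / n - π := by
        have hcast : ((j:ℝ) - k) = (((j+n-k)%n : ℕ):ℝ) - n := by
          rw [h']; push_cast [show k ≤ j + n by omega]; ring
        rw [hcast]; field_simp
      rw [heq, Real.sin_sub_pi, abs_neg]
      exact abs_of_pos (sin_pos' n _ hb1 hb2)
    · have h' : (j+n-k) % n = j-k := by
        rw [Nat.mod_eq_sub_mod h, Nat.mod_eq_of_lt (by omega)]
        omega
      have hle : k ≤ j := by omega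
      have : ((j:ℝ) - k) = (((j+n-k)%n : ℕ):ℝ) := by
        rw [h']; push_cast [hle]; ring
      rw [this]
      exact abs_of_pos (sin_pos' n _ hb1 hb2)
  rw [abs_mul, hsina, hsinb]

lemma inj_sum_bound (n : ℕ) (hn : 2 ≤ n) :
    ∑ p ∈ (Finset.range n ×ˢ Finset.range n).filter
        (fun p => p.1 ≠ p.2 ∧ p.1 + p.2 ≠ n),
      (Real.sin (π * (((p.1+p.2) % n : ℕ) : ℝ) / n))⁻¹ *
        (Real.sin (π * (((p.1+n-p.2) % n : ℕ) : ℝ) / n))⁻¹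
      ≤ 4 * (∑ m ∈ Finset.Ico 1 n, (Real.sin (π * m / n))⁻¹) ^ 2 := by
  classical
  set P := (Finset.range n ×ˢ Finset.range n).filter
      (fun p : ℕ × ℕ => p.1 ≠ p.2 ∧ p.1 + p.2 ≠ n) with hP
  set e : ℕ × ℕ → (ℕ × ℕ) × (Bool × Bool) :=
    fun p => (((p.1+p.2) % n, (p.1+n-p.2) % n),
      (decide (p.2 ≤ p.1), decide (n ≤ p.1 + p.2))) with he
  set G : (ℕ × ℕ) × (Bool × Bool) → ℝ :=
    fun q => (Real.sin (π * (q.1.1 : ℝ) / n))⁻¹ * (Real.sin (π * (q.1.2 : ℝ) / n))⁻¹ with hG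
  have hmem : ∀ p ∈ P, p.1 < n ∧ p.2 < n ∧ p.1 ≠ p.2 ∧ p.1 + p.2 ≠ n := by
    intro p hp
    simp only [hP, Finset.mem_filter, Finset.mem_product, Finset.mem_range] at hp
    tauto
  have hinj : Set.InjOn e P := by
    intro p hp q hq hpq
    obtain ⟨hp1, hp2, hp3, hp4⟩ := hmem p (by simpa using hp)
    obtain ⟨hq1, hq2, hq3, hq4⟩ := hmem q (by simpa using hq)
    simp only [he, Prod.mk.injEq, decide_eq_decide] at hpq
    obtain ⟨⟨e1, e2⟩, e3, e4⟩ := hpq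
    rcases lt_or_ge (p.1+p.2) n with c1 | c1 <;>
      rcases lt_or_ge (q.1+q.2) n with c2 | c2 <;>
      rcases lt_or_ge (p.1+n-p.2) n with c3 | c3 <;>
      rcases lt_or_ge (q.1+n-q.2) n with c4 | c4 <;>
      [skip; skip; skip; skip; skip; skip; skip; skip; skip; skip; skip; skip;
       skip; skip; skip; skip] <;>
    · first
      | (rw [Nat.mod_eq_of_lt c1] at e1) | (rw [Nat.mod_eq_sub_mod c1, Nat.mod_eq_of_lt (by omega)] at e1)
      first
      | (rw [Nat.mod_eq_of_lt c2] at e1) | (rw [Nat.mod_eq_sub_mod c2, Nat.mod_eq_of_lt (by omega)] at e1)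
      first
      | (rw [Nat.mod_eq_of_lt c3] at e2) | (rw [Nat.mod_eq_sub_mod c3, Nat.mod_eq_of_lt (by omega)] at e2)
      first
      | (rw [Nat.mod_eq_of_lt c4] at e2) | (rw [Nat.mod_eq_sub_mod c4, Nat.mod_eq_of_lt (by omega)] at e2)
      exact Prod.ext (by omega) (by omega)
  have hrw : ∀ p ∈ P,
      (Real.sin (π * (((p.1+p.2) % n : ℕ) : ℝ) / n))⁻¹ *
        (Real.sin (π * (((p.1+n-p.2) % n : ℕ) : ℝ) / n))⁻¹ = G (e p) := by
    intro p _; rfl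
  rw [Finset.sum_congr rfl hrw, ← Finset.sum_image (fun p hp q hq h => hinj hp hq h)]
  have hsub : P.image e ⊆ (Finset.Ico 1 n ×ˢ Finset.Ico 1 n) ×ˢ (Finset.univ : Finset (Bool × Bool)) := by
    intro q hq
    simp only [Finset.mem_image] at hq
    obtain ⟨p, hp, rfl⟩ := hq
    obtain ⟨hp1, hp2, hp3, hp4⟩ := hmem p hp
    obtain ⟨m1, m2, m3, m4⟩ := mod_bounds n p.1 p.2 hn hp1 hp2 hp3 hp4
    simp only [he, Finset.mem_product, Finset.mem_Ico, Finset.mem_univ]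
    exact ⟨⟨⟨m1, m2⟩, m3, m4⟩, trivial⟩
  have hnonneg : ∀ q ∈ (Finset.Ico 1 n ×ˢ Finset.Ico 1 n) ×ˢ (Finset.univ : Finset (Bool × Bool)),
      q ∉ P.image e → 0 ≤ G q := by
    intro q hq _
    simp only [Finset.mem_product, Finset.mem_Ico] at hq
    obtain ⟨⟨⟨h1, h2⟩, h3, h4⟩, -⟩ := hq
    have := sin_pos' n q.1.1 h1 h2
    have := sin_pos' n q.1.2 h3 h4
    positivity
  refine le_trans (Finset.sum_le_sum_of_subset_of_nonneg hsub hnonneg) ?_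
  rw [Finset.sum_product]
  have : ∀ a ∈ Finset.Ico 1 n ×ˢ Finset.Ico 1 n,
      ∑ _b ∈ (Finset.univ : Finset (Bool × Bool)), G (a, _b)
        = 4 * ((Real.sin (π * (a.1 : ℝ) / n))⁻¹ * (Real.sin (π * (a.2 : ℝ) / n))⁻¹) := by
    intro a _
    simp only [hG]
    rw [Finset.sum_const]
    simp only [Finset.card_univ, Fintype.card_prod, Fintype.card_bool, nsmul_eq_mul]
    norm_num
  rw [Finset.sum_congr rfl this, ← Finset.mul_sum]
  rw [Finset.sum_product]
  have : ∑ x ∈ Finset.Ico 1 n, ∑ y ∈ Finset.Ico 1 n,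
      (Real.sin (π * (x : ℝ) / n))⁻¹ * (Real.sin (π * (y : ℝ) / n))⁻¹
      = (∑ m ∈ Finset.Ico 1 n, (Real.sin (π * m / n))⁻¹) ^ 2 := by
    rw [sq, Finset.sum_mul_sum]
  rw [this]

lemma norm_integral_osc (s : ℝ) (hs : s ≠ 0) (T : ℝ) (c : ℂ) (hc : ‖c‖ = 1) :
    ‖∫ t in (0:ℝ)..T, Complex.exp (-(Complex.I * (t:ℂ)) * (s:ℂ)) * c‖ ≤ 2 / |s| := by
  have h1 : ∀ t : ℝ, -(Complex.I * (t:ℂ)) * (s:ℂ) = (-(Complex.I * (s:ℂ))) * (t:ℂ) := by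
    intro t; ring
  have hc' : -(Complex.I * (s:ℂ)) ≠ 0 := by
    simp [Complex.I_ne_zero, Complex.ofReal_ne_zero, hs]
  simp_rw [h1]
  rw [intervalIntegral.integral_mul_const, integral_exp_mul_complex hc']
  rw [norm_mul, hc, mul_one, norm_div]
  have hnorm : ‖-(Complex.I * (s:ℂ))‖ = |s| := by
    rw [norm_neg, norm_mul, Complex.norm_I, one_mul, Complex.norm_real, Real.norm_eq_abs]
  rw [hnorm]
  have hnum : ‖Complex.exp (-(Complex.I * (s:ℂ)) * (T:ℂ)) - Complex.exp (-(Complex.I * (s:ℂ)) * ((0:ℝ):ℂ))‖ ≤ 2 := by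
    refine (norm_sub_le _ _).trans ?_
    have e1 : -(Complex.I * (s:ℂ)) * (T:ℂ) = ((-(s*T) : ℝ):ℂ) * Complex.I := by
      push_cast; ring
    have e2 : -(Complex.I * (s:ℂ)) * ((0:ℝ):ℂ) = ((0 : ℝ):ℂ) * Complex.I := by
      push_cast; ring
    rw [e1, e2,
      Complex.norm_exp_ofReal_mul_I, Complex.norm_exp_ofReal_mul_I]
    norm_num
  exact (div_le_div_iff_of_pos_right (abs_pos.mpr hs)).mpr hnum


/-- The oscillatory trigonometric sum `n_l(t)` for the `n`-cycle:
`Σ_{0 ≤ j,k ≤ n−1, j ≠ k, j+k ≠ n} e^{−i t sin(π(j+k)/n) sin(π(j−k)/n)} ω^{l(j−k)}`,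
with `ω = e^{2πi/n}`. -/
noncomputable def cycleOsc (n : ℕ) (l : ℤ) (t : ℝ) : ℂ :=
  ∑ j ∈ Finset.range n, ∑ k ∈ Finset.range n,
    if j ≠ k ∧ j + k ≠ n then
      Complex.exp (-(Complex.I * (t : ℂ)) *
          ((Real.sin (Real.pi * ((j : ℝ) + (k : ℝ)) / n)
            * Real.sin (Real.pi * ((j : ℝ) - (k : ℝ)) / n) : ℝ) : ℂ))
        * Complex.exp (2 * Real.pi * Complex.I / n) ^ (l * ((j : ℤ) - (k : ℤ)))
    else 0

/-- (Lemma 2 of the paper.) The time integral of the oscillatory sum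
`n_l(t)` is bounded by `32·(n·ln n)²`. -/
theorem integral_cycleOsc_le
    (n : ℕ) (hn : 2 ≤ n) (l : ℤ) (T : ℝ) (hT : 0 ≤ T) :
    ‖∫ t in (0 : ℝ)..T, cycleOsc n l t‖ ≤ 32 * ((n : ℝ) * Real.log n) ^ 2 := by
  classical
  have hn0 : (0:ℝ) < n := by positivity
  set w : ℕ × ℕ → ℂ := fun p =>
    Complex.exp (2 * Real.pi * Complex.I / n) ^ (l * ((p.1 : ℤ) - (p.2 : ℤ))) with hw
  set sf : ℕ × ℕ → ℝ := fun p =>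
    Real.sin (Real.pi * ((p.1 : ℝ) + (p.2 : ℝ)) / n)
      * Real.sin (Real.pi * ((p.1 : ℝ) - (p.2 : ℝ)) / n) with hsf
  set f : ℕ × ℕ → ℝ → ℂ := fun p t =>
    if p.1 ≠ p.2 ∧ p.1 + p.2 ≠ n then
      Complex.exp (-(Complex.I * (t : ℂ)) * ((sf p : ℝ) : ℂ)) * w p
    else 0 with hf
  have hcyc : ∀ t, cycleOsc n l t = ∑ p ∈ Finset.range n ×ˢ Finset.range n, f p t := by
    intro t
    rw [cycleOsc, Finset.sum_product]
  have hwnorm : ∀ p : ℕ × ℕ, ‖w p‖ = 1 := by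
    intro p
    rw [hw]
    have hbase : ‖Complex.exp (2 * (Real.pi:ℂ) * Complex.I / n)‖ = 1 := by
      have : (2 * (Real.pi:ℂ) * Complex.I / n) = ((2 * Real.pi / n : ℝ):ℂ) * Complex.I := by
        push_cast; ring
      rw [this, Complex.norm_exp_ofReal_mul_I]
    simp only [norm_zpow, hbase, one_zpow]
  -- pointwise members facts
  have hP : ∀ p ∈ (Finset.range n ×ˢ Finset.range n).filter
      (fun p : ℕ × ℕ => p.1 ≠ p.2 ∧ p.1 + p.2 ≠ n),
      p.1 < n ∧ p.2 < n ∧ p.1 ≠ p.2 ∧ p.1 + p.2 ≠ n := by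
    intro p hp
    simp only [Finset.mem_filter, Finset.mem_product, Finset.mem_range] at hp
    tauto
  have hint : ∀ p ∈ Finset.range n ×ˢ Finset.range n,
      IntervalIntegrable (f p) MeasureTheory.volume 0 T := by
    intro p _
    by_cases h : p.1 ≠ p.2 ∧ p.1 + p.2 ≠ n
    · simp only [hf, if_pos h]
      apply Continuous.intervalIntegrable
      exact (Complex.continuous_exp.comp (by fun_prop)).mul continuous_const
    · simp only [hf, if_neg h]
      exact intervalIntegrable_const
  have hswap : (∫ t in (0:ℝ)..T, cycleOsc n l t)
      = ∑ p ∈ Finset.range n ×ˢ Finset.range n, ∫ t in (0:ℝ)..T, f p t := by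
    rw [intervalIntegral.integral_congr (fun t _ => hcyc t),
      intervalIntegral.integral_finset_sum hint]
  rw [hswap]
  refine le_trans (norm_sum_le _ _) ?_
  have hzero : ∀ p ∈ Finset.range n ×ˢ Finset.range n,
      p ∉ (Finset.range n ×ˢ Finset.range n).filter
        (fun p : ℕ × ℕ => p.1 ≠ p.2 ∧ p.1 + p.2 ≠ n) →
      ‖∫ t in (0:ℝ)..T, f p t‖ = 0 := by
    intro p hp hnp
    have : ¬(p.1 ≠ p.2 ∧ p.1 + p.2 ≠ n) := by
      simp only [Finset.mem_filter] at hnp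
      tauto
    simp only [hf, if_neg this]
    simp
  rw [← Finset.sum_filter_add_sum_filter_not (Finset.range n ×ˢ Finset.range n)
    (fun p : ℕ × ℕ => p.1 ≠ p.2 ∧ p.1 + p.2 ≠ n)]
  have hzero' : ∑ p ∈ (Finset.range n ×ˢ Finset.range n).filter
      (fun p : ℕ × ℕ => ¬(p.1 ≠ p.2 ∧ p.1 + p.2 ≠ n)), ‖∫ t in (0:ℝ)..T, f p t‖ = 0 := by
    apply Finset.sum_eq_zero
    intro p hp
    simp only [Finset.mem_filter] at hp
    simp only [hf, if_neg hp.2]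
    simp
  rw [hzero', add_zero]
  -- bound each term on the filtered set
  have hbound : ∀ p ∈ (Finset.range n ×ˢ Finset.range n).filter
      (fun p : ℕ × ℕ => p.1 ≠ p.2 ∧ p.1 + p.2 ≠ n),
      ‖∫ t in (0:ℝ)..T, f p t‖ ≤
        2 * ((Real.sin (π * (((p.1+p.2) % n : ℕ) : ℝ) / n))⁻¹ *
          (Real.sin (π * (((p.1+n-p.2) % n : ℕ) : ℝ) / n))⁻¹) := by
    intro p hp
    obtain ⟨h1, h2, h3, h4⟩ := hP p hp
    obtain ⟨m1, m2, m3, m4⟩ := mod_bounds n p.1 p.2 hn h1 h2 h3 h4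
    have habs := abs_sin_prod n p.1 p.2 hn h1 h2 h3 h4
    have hsne : sf p ≠ 0 := by
      intro h0
      rw [hsf] at h0
      have : |Real.sin (π * ((p.1:ℝ) + p.2) / n) * Real.sin (π * ((p.1:ℝ) - p.2) / n)| = 0 := by
        simp only at h0 ⊢
        rw [h0, abs_zero]
      rw [habs] at this
      have hpa := sin_pos' n _ m1 m2
      have hpb := sin_pos' n _ m3 m4
      nlinarith
    have : (fun t : ℝ => f p t) = fun t : ℝ =>
        Complex.exp (-(Complex.I * (t:ℂ)) * ((sf p : ℝ):ℂ)) * w p := by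
      funext t
      rw [hf]
      simp only [if_pos (And.intro h3 h4)]
    rw [this]
    refine le_trans (norm_integral_osc (sf p) hsne T (w p) (hwnorm p)) ?_
    have habs' : |sf p| = Real.sin (π * (((p.1+p.2) % n : ℕ) : ℝ) / n) *
        Real.sin (π * (((p.1+n-p.2) % n : ℕ) : ℝ) / n) := habs
    rw [habs']
    rw [div_eq_mul_inv, mul_inv]
  refine le_trans (Finset.sum_le_sum hbound) ?_
  rw [← Finset.mul_sum]
  have hG := inj_sum_bound n hn
  have hS := sum_inv_sin_le n hn
  have hS0 : 0 ≤ ∑ m ∈ Finset.Ico 1 n, (Real.sin (π * m / n))⁻¹ := by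
    apply Finset.sum_nonneg
    intro m hm
    simp only [Finset.mem_Ico] at hm
    exact le_of_lt (inv_pos.mpr (sin_pos' n m hm.1 hm.2))
  have hsq : (∑ m ∈ Finset.Ico 1 n, (Real.sin (π * m / n))⁻¹) ^ 2
      ≤ (2 * n * Real.log n) ^ 2 := pow_le_pow_left₀ hS0 hS 2
  calc 2 * ∑ p ∈ (Finset.range n ×ˢ Finset.range n).filter
        (fun p : ℕ × ℕ => p.1 ≠ p.2 ∧ p.1 + p.2 ≠ n),
        ((Real.sin (π * (((p.1+p.2) % n : ℕ) : ℝ) / n))⁻¹ *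
          (Real.sin (π * (((p.1+n-p.2) % n : ℕ) : ℝ) / n))⁻¹)
      ≤ 2 * (4 * (∑ m ∈ Finset.Ico 1 n, (Real.sin (π * m / n))⁻¹) ^ 2) := by linarith
    _ ≤ 2 * (4 * (2 * n * Real.log n) ^ 2) := by linarith
    _ = 32 * ((n : ℝ) * Real.log n) ^ 2 := by ring
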